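/- (Functorial calculus of finite differences.) Let (A, D, act, add, e) be a strict change action in Cat, let G be an abelian group, and let F : A ⥤ Arr(G) be a functor. Then F is change-action differentiable with respect to the subtraction change action on Arr(G): there exists a functor ∂F : A × D ⥤ Arr(G), given on objects by ∂F(A, α) = F(A) − F(act(A, α)) and on morphisms by componentwise differences, such that: (CAD1) for every object (A, α) of A × D, F(act(A, α)) = F(A) − ∂F(A, α), and for every morphism (f, φ) of A × D, each component of F(act(f, φ)) equals the corresponding component of F(f) minus that of ∂F(f, φ); (CAD2, first part) for all objects A of A and α, β of D, ∂F(A, add(α, β)) = ∂F(A, α) + ∂F(act(A, α), β), and the corresponding componentwise equation holds for morphisms; (CAD2, second part) ∂F(A, e) = 0 for every object A, and both components of ∂F(f, id_e) are 0 for every morphism f of A. -/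

import Mathlib

open CategoryTheory

/-- Objects of the arrow category `Arr(G)` of the delooping of the abelian group `G`:
elements of `G` (morphisms of `BG`). -/
abbrev Arr (G : Type*) [AddCommGroup G] : Type _ := G

/-- The arrow category of the delooping of `G`: a morphism from `a` to `b` is a pair
`(f, g)` of elements of `G` with `f + b = a + g` (a commuting square in `BG`);
composition is componentwise addition and the identity is `(0, 0)`. -/
instance arrCategory (G : Type*) [AddCommGroup G] : Category (Arr G) where
  Hom a b := {p : G × G // p.1 + b = a + p.2}
  id a := ⟨(0, 0), by abel⟩
  comp {a b c} f g := ⟨(f.1.1 + g.1.1, f.1.2 + g.1.2), by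
    have h1 := f.2
    have h2 := g.2
    calc f.1.1 + g.1.1 + c = f.1.1 + (g.1.1 + c) := by abel
      _ = f.1.1 + (b + g.1.2) := by rw [h2]
      _ = f.1.1 + b + g.1.2 := by abel
      _ = a + f.1.2 + g.1.2 := by rw [h1]
      _ = a + (f.1.2 + g.1.2) := by abel⟩
  id_comp f := by apply Subtype.ext; simp
  comp_id f := by apply Subtype.ext; simp
  assoc f g h := by apply Subtype.ext; simp [add_assoc]


/-- Components of `F.map` are invariant under heterogeneous equality of morphisms
over equal objects. -/
lemma map_fst_congr {G : Type} [AddCommGroup G] {A : Type} [Category A]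
    (F : A ⥤ Arr G) {x y x' y' : A} (h : x = y) (h' : x' = y')
    (u : x ⟶ x') (v : y ⟶ y') (huv : HEq u v) :
    (F.map u).1 = (F.map v).1 := by
  subst h; subst h'; cases huv; rfl

/-- **Functorial calculus of finite differences.** Given a strict change action
`(A, D, act, add, e)` in `Cat` and a functor `F : A ⥤ Arr(G)`, the finite difference
`∂F(A, α) = F(A) − F(act(A, α))` is a change-action derivative of `F` with respect to
the subtraction change action `(Arr(G), Arr(G), −, +, 0)`: it satisfies CAD1 and CAD2. -/
theorem functorial_finite_differences (G : Type) [AddCommGroup G]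
    (A D : Type) [Category A] [Category D]
    (act : A × D ⥤ A) (add : D × D ⥤ D) (e : D)
    -- strict monoid laws on objects
    (hunit₁ : ∀ α : D, add.obj (α, e) = α)
    (hunit₂ : ∀ α : D, add.obj (e, α) = α)
    (hassoc : ∀ α β γ : D, add.obj (add.obj (α, β), γ) = add.obj (α, add.obj (β, γ)))
    -- strict monoid laws on morphisms
    (hunit₁m : ∀ {α β : D} (φ : α ⟶ β),
      HEq (add.map ((φ, 𝟙 e) : ((α, e) : D × D) ⟶ (β, e))) φ)
    (hunit₂m : ∀ {α β : D} (φ : α ⟶ β),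
      HEq (add.map ((𝟙 e, φ) : ((e, α) : D × D) ⟶ (e, β))) φ)
    (hassocm : ∀ {α α' β β' γ γ' : D} (φ : α ⟶ α') (ψ : β ⟶ β') (χ : γ ⟶ γ'),
      HEq (add.map ((add.map ((φ, ψ) : ((α, β) : D × D) ⟶ (α', β')), χ)
            : ((add.obj (α, β), γ) : D × D) ⟶ (add.obj (α', β'), γ')))
          (add.map ((φ, add.map ((ψ, χ) : ((β, γ) : D × D) ⟶ (β', γ')))
            : ((α, add.obj (β, γ)) : D × D) ⟶ (α', add.obj (β', γ')))))
    -- strict action laws on objects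
    (hacte : ∀ a : A, act.obj (a, e) = a)
    (hactcomp : ∀ (a : A) (α β : D),
      act.obj (act.obj (a, α), β) = act.obj (a, add.obj (α, β)))
    -- strict action laws on morphisms
    (hactem : ∀ {a b : A} (f : a ⟶ b),
      HEq (act.map ((f, 𝟙 e) : ((a, e) : A × D) ⟶ (b, e))) f)
    (hactcompm : ∀ {a b : A} {α α' β β' : D} (f : a ⟶ b) (φ : α ⟶ α') (ψ : β ⟶ β'),
      HEq (act.map ((act.map ((f, φ) : ((a, α) : A × D) ⟶ (b, α')), ψ)
            : ((act.obj (a, α), β) : A × D) ⟶ (act.obj (b, α'), β')))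
          (act.map ((f, add.map ((φ, ψ) : ((α, β) : D × D) ⟶ (α', β')))
            : ((a, add.obj (α, β)) : A × D) ⟶ (b, add.obj (α', β')))))
    (F : A ⥤ Arr G) :
    ∃ dF : (A × D) ⥤ Arr G,
      -- `∂F` on objects and morphisms
      (∀ p : A × D, dF.obj p = F.obj p.1 - F.obj (act.obj p)) ∧
      (∀ {p q : A × D} (φ : p ⟶ q),
        (dF.map φ).1
          = ((F.map φ.1).1.1 - (F.map (act.map φ)).1.1,
             (F.map φ.1).1.2 - (F.map (act.map φ)).1.2)) ∧
      -- CAD1 on objects: F(act(A, α)) = F(A) − ∂F(A, α)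
      (∀ (a : A) (α : D), F.obj (act.obj (a, α)) = F.obj a - dF.obj (a, α)) ∧
      -- CAD1 on morphisms, componentwise
      (∀ {p q : A × D} (φ : p ⟶ q),
        (F.map (act.map φ)).1
          = ((F.map φ.1).1.1 - (dF.map φ).1.1,
             (F.map φ.1).1.2 - (dF.map φ).1.2)) ∧
      -- CAD2, first part, on objects
      (∀ (a : A) (α β : D),
        dF.obj (a, add.obj (α, β)) = dF.obj (a, α) + dF.obj (act.obj (a, α), β)) ∧
      -- CAD2, first part, on morphisms, componentwise
      (∀ {a b : A} {α α' β β' : D} (f : a ⟶ b) (φ : α ⟶ α') (ψ : β ⟶ β'),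
        (dF.map ((f, add.map ((φ, ψ) : ((α, β) : D × D) ⟶ (α', β')))
            : ((a, add.obj (α, β)) : A × D) ⟶ (b, add.obj (α', β')))).1
          = ((dF.map ((f, φ) : ((a, α) : A × D) ⟶ (b, α'))).1.1
              + (dF.map ((act.map ((f, φ) : ((a, α) : A × D) ⟶ (b, α')), ψ)
                  : ((act.obj (a, α), β) : A × D) ⟶ (act.obj (b, α'), β'))).1.1,
             (dF.map ((f, φ) : ((a, α) : A × D) ⟶ (b, α'))).1.2
              + (dF.map ((act.map ((f, φ) : ((a, α) : A × D) ⟶ (b, α')), ψ)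
                  : ((act.obj (a, α), β) : A × D) ⟶ (act.obj (b, α'), β'))).1.2)) ∧
      -- CAD2, second part
      (∀ a : A, dF.obj (a, e) = 0) ∧
      (∀ {a b : A} (f : a ⟶ b),
        (dF.map ((f, 𝟙 e) : ((a, e) : A × D) ⟶ (b, e))).1 = ((0 : G), (0 : G))) := by
  refine ⟨{
    obj := fun p => F.obj p.1 - F.obj (act.obj p)
    map := fun {p q} φ => ⟨((F.map φ.1).1.1 - (F.map (act.map φ)).1.1,
        (F.map φ.1).1.2 - (F.map (act.map φ)).1.2), by
      have h1 := (F.map φ.1).2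
      have h2 := (F.map (act.map φ)).2
      have key : (F.map φ.1).1.1 - (F.map (act.map φ)).1.1
          + (F.obj q.1 - F.obj (act.obj q))
          = ((F.map φ.1).1.1 + F.obj q.1)
            - ((F.map (act.map φ)).1.1 + F.obj (act.obj q)) := by abel
      rw [key, h1, h2]; exact (sub_add_sub_comm _ _ _ _).symm⟩
    map_id := fun p => by
      apply Subtype.ext
      dsimp only
      rw [show ((𝟙 p : p ⟶ p).1) = 𝟙 p.1 from rfl, act.map_id, F.map_id, F.map_id]
      show ((0 : G) - 0, (0 : G) - 0) = ((0 : G), (0 : G))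
      simp
    map_comp := fun {p q r} φ ψ => by
      apply Subtype.ext
      dsimp only
      rw [show ((φ ≫ ψ).1) = φ.1 ≫ ψ.1 from rfl, act.map_comp, F.map_comp, F.map_comp]
      show ((F.map φ.1).1.1 + (F.map ψ.1).1.1
              - ((F.map (act.map φ)).1.1 + (F.map (act.map ψ)).1.1),
            (F.map φ.1).1.2 + (F.map ψ.1).1.2
              - ((F.map (act.map φ)).1.2 + (F.map (act.map ψ)).1.2))
          = ((F.map φ.1).1.1 - (F.map (act.map φ)).1.1
              + ((F.map ψ.1).1.1 - (F.map (act.map ψ)).1.1),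
             (F.map φ.1).1.2 - (F.map (act.map φ)).1.2
              + ((F.map ψ.1).1.2 - (F.map (act.map ψ)).1.2))
      rw [Prod.mk.injEq]
      exact ⟨by abel, by abel⟩ }, ?_, ?_, ?_, ?_, ?_, ?_, ?_, ?_⟩
  · intro p; rfl
  · intro p q φ; rfl
  · intro a α
    show F.obj (act.obj (a, α)) = F.obj a - (F.obj a - F.obj (act.obj (a, α)))
    abel
  · intro p q φ
    show ((F.map (act.map φ)).1.1, (F.map (act.map φ)).1.2)
      = ((F.map φ.1).1.1 - ((F.map φ.1).1.1 - (F.map (act.map φ)).1.1),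
         (F.map φ.1).1.2 - ((F.map φ.1).1.2 - (F.map (act.map φ)).1.2))
    rw [Prod.mk.injEq]
    exact ⟨by abel, by abel⟩
  · intro a α β
    show F.obj a - F.obj (act.obj (a, add.obj (α, β)))
      = (F.obj a - F.obj (act.obj (a, α)))
        + (F.obj (act.obj (a, α)) - F.obj (act.obj (act.obj (a, α), β)))
    rw [hactcomp a α β]; abel
  · intro a b α α' β β' f φ ψ
    have h := map_fst_congr F (hactcomp a α β) (hactcomp b α' β')
      (act.map ((act.map ((f, φ) : ((a, α) : A × D) ⟶ (b, α')), ψ)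
        : ((act.obj (a, α), β) : A × D) ⟶ (act.obj (b, α'), β')))
      (act.map ((f, add.map ((φ, ψ) : ((α, β) : D × D) ⟶ (α', β')))
        : ((a, add.obj (α, β)) : A × D) ⟶ (b, add.obj (α', β'))))
      (hactcompm f φ ψ)
    show ((F.map f).1.1 - (F.map (act.map ((f, add.map ((φ, ψ) : ((α, β) : D × D) ⟶ (α', β')))
            : ((a, add.obj (α, β)) : A × D) ⟶ (b, add.obj (α', β'))))).1.1,
          (F.map f).1.2 - (F.map (act.map ((f, add.map ((φ, ψ) : ((α, β) : D × D) ⟶ (α', β')))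
            : ((a, add.obj (α, β)) : A × D) ⟶ (b, add.obj (α', β'))))).1.2)
      = ((F.map f).1.1 - (F.map (act.map ((f, φ) : ((a, α) : A × D) ⟶ (b, α')))).1.1
          + ((F.map (act.map ((f, φ) : ((a, α) : A × D) ⟶ (b, α')))).1.1
            - (F.map (act.map ((act.map ((f, φ) : ((a, α) : A × D) ⟶ (b, α')), ψ)
                : ((act.obj (a, α), β) : A × D) ⟶ (act.obj (b, α'), β')))).1.1),
         (F.map f).1.2 - (F.map (act.map ((f, φ) : ((a, α) : A × D) ⟶ (b, α')))).1.2
          + ((F.map (act.map ((f, φ) : ((a, α) : A × D) ⟶ (b, α')))).1.2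
            - (F.map (act.map ((act.map ((f, φ) : ((a, α) : A × D) ⟶ (b, α')), ψ)
                : ((act.obj (a, α), β) : A × D) ⟶ (act.obj (b, α'), β')))).1.2))
    rw [h, Prod.mk.injEq]
    exact ⟨by abel, by abel⟩
  · intro a
    show F.obj a - F.obj (act.obj (a, e)) = 0
    rw [hacte a]; abel
  · intro a b f
    have h := map_fst_congr F (hacte a) (hacte b)
      (act.map ((f, 𝟙 e) : ((a, e) : A × D) ⟶ (b, e))) f (hactem f)
    show ((F.map f).1.1 - (F.map (act.map ((f, 𝟙 e) : ((a, e) : A × D) ⟶ (b, e)))).1.1,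
          (F.map f).1.2 - (F.map (act.map ((f, 𝟙 e) : ((a, e) : A × D) ⟶ (b, e)))).1.2)
        = ((0 : G), (0 : G))
    rw [h, Prod.mk.injEq]
    exact ⟨sub_self _, sub_self _⟩
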